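/- Zwegers' μ-function μ(x,y) = (i q^{-1/8} √(xy) / θ_q(-y)) ∑_{n∈ℤ} (-1)^n y^n q^{n(n+1)/2} / (1 - x q^n) satisfies the second-order q-difference equation μ(q²x, y) - q^{1/2}(1 - (x/y)q) μ(qx, y) - (x/y) q μ(x,y) = 0. -/

import Mathlib

open Complex Real

/-- The infinite q-Pochhammer symbol `(a;q)_∞ = ∏_{j≥0} (1 - a q^j)`. -/
noncomputable def qPochInf (a q : ℂ) : ℂ := ∏' j : ℕ, (1 - a * q ^ j)

/-- The theta function `θ_q(x) = (q;q)_∞ (-x;q)_∞ (-q/x;q)_∞`. -/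
noncomputable def thetaQ (q x : ℂ) : ℂ := qPochInf q q * qPochInf (-x) q * qPochInf (-q / x) q

/-- Zwegers' μ-function in multiplicative notation, with `x = e^{2πiu}`, `y = e^{2πiv}`,
`q = e^{2πiτ}` and the branch `√(xy) = e^{πi(u+v)}`, `q^{-1/8} = e^{-πiτ/4}`:
`μ(x,y) = i q^{-1/8} √(xy)/θ_q(-y) ∑_{n∈ℤ} (-1)^n y^n q^{n(n+1)/2}/(1 - x q^n)`. -/
noncomputable def zwegersMu (τ u v : ℂ) : ℂ :=
  I * Complex.exp (-(π : ℂ) * I * τ / 4) * Complex.exp ((π : ℂ) * I * (u + v)) /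
      thetaQ (Complex.exp (2 * (π : ℂ) * I * τ)) (-Complex.exp (2 * (π : ℂ) * I * v)) *
    ∑' n : ℤ,
      (-1 : ℂ) ^ n * Complex.exp (2 * (π : ℂ) * I * v) ^ n *
        Complex.exp (2 * (π : ℂ) * I * τ) ^ (n * (n + 1) / 2) /
        (1 - Complex.exp (2 * (π : ℂ) * I * u) * Complex.exp (2 * (π : ℂ) * I * τ) ^ n)

section MuHelpers
open Filter

private lemma muE_add_one (n : ℤ) : (n+1)*((n+1)+1)/2 = n*(n+1)/2 + (n+1) := by
  obtain ⟨k, hk⟩ := Int.even_mul_succ_self n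
  have h2 : (n+1)*((n+1)+1) = (k+k) + 2*(n+1) := by rw [← hk]; ring
  rw [h2, hk]; omega

private lemma muE_sub_one (n : ℤ) : (n-1)*((n-1)+1)/2 = n*(n+1)/2 - n := by
  obtain ⟨k, hk⟩ := Int.even_mul_succ_self n
  have h2 : (n-1)*((n-1)+1) = (k+k) - 2*n := by rw [← hk]; ring
  rw [h2, hk]; omega

private lemma muE_sub_two (n : ℤ) : (n-2)*((n-2)+1)/2 = n*(n+1)/2 - (2*n-1) := by
  obtain ⟨k, hk⟩ := Int.even_mul_succ_self n
  have h2 : (n-2)*((n-2)+1) = (k+k) - 2*(2*n-1) := by rw [← hk]; ring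
  rw [h2, hk]; omega

private lemma mu_ratio_summable {F : ℕ → ℂ} (hF : ∀ n, F n ≠ 0) {r : ℕ → ℂ}
    (hr : Tendsto r atTop (nhds 0)) (key : ∀ n, F (n+1) = r n * F n) : Summable F := by
  apply summable_of_ratio_test_tendsto_lt_one zero_lt_one (Eventually.of_forall hF)
  have h1 : ∀ n, ‖F (n+1)‖/‖F n‖ = ‖r n‖ := by
    intro n
    rw [key, norm_mul, mul_div_assoc, div_self (norm_ne_zero_iff.mpr (hF n)), mul_one]
  exact Tendsto.congr (fun n => (h1 n).symm) (by simpa using hr.norm)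

private lemma mu_tendsto_q_pow {q : ℂ} (hq : ‖q‖ < 1) :
    Tendsto (fun n : ℕ => q ^ (n : ℤ)) atTop (nhds 0) := by
  simpa [zpow_natCast] using tendsto_pow_atTop_nhds_zero_of_norm_lt_one hq

private lemma muSummable_theta {q w : ℂ} (hq : ‖q‖ < 1) (hq0 : q ≠ 0) (hw : w ≠ 0) :
    Summable (fun n : ℤ => w ^ n * q ^ (n*(n+1)/2)) := by
  have hqn : ∀ m : ℤ, q ^ m ≠ 0 := fun m => zpow_ne_zero m hq0
  apply Summable.of_nat_of_neg
  · apply mu_ratio_summable (r := fun n : ℕ => w * q ^ ((n:ℤ)+1))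
    · intro n; exact mul_ne_zero (zpow_ne_zero _ hw) (hqn _)
    · have := ((mu_tendsto_q_pow hq).mul_const q).const_mul w
      simp only [zero_mul, mul_zero] at this
      refine this.congr fun n => ?_
      rw [zpow_add_one₀ hq0]
    · intro n
      have hc : ((n+1 : ℕ) : ℤ) = (n:ℤ)+1 := by push_cast; ring
      simp only [hc]
      rw [muE_add_one, zpow_add₀ hq0, zpow_add_one₀ hw]; ring
  · apply mu_ratio_summable (r := fun n : ℕ => w⁻¹ * q ^ (n:ℤ))
    · intro n; exact mul_ne_zero (zpow_ne_zero _ hw) (hqn _)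
    · have := (mu_tendsto_q_pow hq).const_mul w⁻¹
      simpa using this
    · intro n
      have hc : (-((n+1 : ℕ) : ℤ)) = (-(n:ℤ)) - 1 := by push_cast; ring
      simp only [hc]
      rw [muE_sub_one, sub_neg_eq_add, zpow_add₀ hq0, zpow_sub₀ hw, zpow_one]
      field_simp

private lemma mu_alg_neg (w W Qe P q x : ℂ) (hw : w ≠ 0) (hW : W ≠ 0) (hP : P ≠ 0)
    (hq : q ≠ 0) (hPq : P*q - x ≠ 0) (hPx : P - x ≠ 0) :
    W * w⁻¹ * (Qe * P) / (1 - x*(P*q)⁻¹) =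
      w⁻¹ * P * ((P*q - x*q)/(P*q - x)) * (W * Qe / (1 - x*P⁻¹)) := by
  have hd1 : 1 - x*P⁻¹ ≠ 0 := by
    have h : 1 - x*P⁻¹ = (P - x) * P⁻¹ := by field_simp
    rw [h]; exact mul_ne_zero hPx (inv_ne_zero hP)
  have hd2 : 1 - x*(P*q)⁻¹ ≠ 0 := by
    have h : 1 - x*(P*q)⁻¹ = (P*q - x) * (P*q)⁻¹ := by field_simp
    rw [h]; exact mul_ne_zero hPq (inv_ne_zero (mul_ne_zero hP hq))
  field_simp

private lemma muSummable_core {q x w : ℂ} (hq : ‖q‖ < 1) (hq0 : q ≠ 0) (hw : w ≠ 0)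
    (hx0 : x ≠ 0) (hx : ∀ n : ℤ, 1 - x * q ^ n ≠ 0) :
    Summable (fun n : ℤ => w ^ n * q ^ (n*(n+1)/2) / (1 - x * q ^ n)) := by
  have hqn : ∀ m : ℤ, q ^ m ≠ 0 := fun m => zpow_ne_zero m hq0
  have hne : ∀ m : ℤ, w ^ m * q ^ (m*(m+1)/2) / (1 - x*q^m) ≠ 0 := fun m =>
    div_ne_zero (mul_ne_zero (zpow_ne_zero _ hw) (hqn _)) (hx m)
  have hq1 : Tendsto (fun n : ℕ => q ^ ((n:ℤ)+1)) atTop (nhds 0) := by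
    have := (mu_tendsto_q_pow hq).mul_const q
    simp only [zero_mul] at this
    exact this.congr fun n => (zpow_add_one₀ hq0 _).symm
  apply Summable.of_nat_of_neg
  · apply mu_ratio_summable
      (r := fun n : ℕ => w * q ^ ((n:ℤ)+1) * ((1 - x*q^(n:ℤ))/(1 - x*q^((n:ℤ)+1))))
    · intro n; exact hne _
    · have hnum : Tendsto (fun n : ℕ => 1 - x*q^(n:ℤ)) atTop (nhds 1) := by
        have := ((mu_tendsto_q_pow hq).const_mul x).const_sub 1
        simpa using this
      have hden : Tendsto (fun n : ℕ => 1 - x*q^((n:ℤ)+1)) atTop (nhds 1) := by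
        have := (hq1.const_mul x).const_sub 1
        simpa using this
      have := (hq1.const_mul w).mul (hnum.div hden one_ne_zero)
      simpa using this
    · intro n
      have hc : ((n+1 : ℕ) : ℤ) = (n:ℤ)+1 := by push_cast; ring
      simp only [hc]
      have hd1 := hx (n:ℤ)
      have hd2 := hx ((n:ℤ)+1)
      rw [muE_add_one, zpow_add₀ hq0, zpow_add_one₀ hw]
      set D1 := 1 - x*q^((n:ℤ)) with hD1
      set D2 := 1 - x*q^((n:ℤ)+1) with hD2
      field_simp
  · apply mu_ratio_summable
      (r := fun n : ℕ => w⁻¹ * q ^ (n:ℤ) * ((q^((n:ℤ)+1) - x*q)/(q^((n:ℤ)+1) - x)))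
    · intro n; exact hne _
    · have hnum : Tendsto (fun n : ℕ => q^((n:ℤ)+1) - x*q) atTop (nhds (-(x*q))) := by
        simpa using hq1.sub_const (x*q)
      have hden : Tendsto (fun n : ℕ => q^((n:ℤ)+1) - x) atTop (nhds (-x)) := by
        simpa using hq1.sub_const x
      have := ((mu_tendsto_q_pow hq).const_mul w⁻¹).mul (hnum.div hden (neg_ne_zero.mpr hx0))
      simpa using this
    · intro n
      have hc : (-((n+1 : ℕ) : ℤ)) = -(n:ℤ) - 1 := by push_cast; ring
      simp only [hc]
      have e1 : (-(n:ℤ) - 1) = -((n:ℤ)+1) := by ring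
      have hq2 : q^((n:ℤ))*q - x ≠ 0 := by
        have h2 : q^((n:ℤ))*q - x = (q^((n:ℤ))*q) * (1 - x * (q^((n:ℤ)+1))⁻¹) := by
          rw [← zpow_add_one₀ hq0]
          linear_combination x * mul_inv_cancel₀ (hqn ((n:ℤ)+1))
        rw [h2, ← zpow_add_one₀ hq0]
        exact mul_ne_zero (hqn _) (by rw [← zpow_neg]; exact hx _)
      have hd1 : 1 - x * (q^((n:ℤ)))⁻¹ ≠ 0 := by rw [← zpow_neg]; exact hx _
      have hd2 : 1 - x * (q^((n:ℤ))*q)⁻¹ ≠ 0 := by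
        rw [← zpow_add_one₀ hq0, ← zpow_neg]; exact hx _
      have hPx : q^((n:ℤ)) - x ≠ 0 := by
        have h2 : q^((n:ℤ)) - x = (q^((n:ℤ))) * (1 - x * (q^((n:ℤ)))⁻¹) := by
          field_simp
        rw [h2]
        exact mul_ne_zero (hqn _) hd1
      have h1 : 1 - x*(q^((n:ℤ))*q)⁻¹ = (q^((n:ℤ))*q - x) * (q^((n:ℤ))*q)⁻¹ := by
        field_simp
      have h2 : 1 - x*(q^((n:ℤ)))⁻¹ = (q^((n:ℤ)) - x) * (q^((n:ℤ)))⁻¹ := by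
        field_simp
      rw [muE_sub_one, sub_neg_eq_add]
      simp only [e1, zpow_neg, zpow_add_one₀ hq0, zpow_add_one₀ hw, zpow_add₀ hq0]
      linear_combination mu_alg_neg w (w^((n:ℤ)))⁻¹ (q^((-(n:ℤ))*(-(n:ℤ)+1)/2)) (q^((n:ℤ))) q x
        hw (inv_ne_zero (zpow_ne_zero _ hw)) (hqn _) hq0 hq2 hPx

private lemma mu_alg_key (Ay Q P x y q : ℂ) (hy : y ≠ 0) (hq : q ≠ 0) (hP : P ≠ 0)
    (hD : 1 - x*P ≠ 0) :
    Ay / ((-y)*(-y)) * (Q/P/P*q) / (1 - x*P)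
      - (1 - x/y*q) * (Ay/(-y) * (Q/P) / (1 - x*P))
      - x/y * (Ay * Q / (1 - x*P))
    = Ay * (Q/P) * y⁻¹ - Ay/(-y) * (Q/P/P*q) * y⁻¹ := by
  simp only [div_eq_mul_inv]
  linear_combination (Ay*Q*(y⁻¹*y⁻¹*q*P⁻¹*P⁻¹ + y⁻¹*P⁻¹)) * mul_inv_cancel₀ hD
    + (Ay*Q*x*(1-x*P)⁻¹*(y⁻¹ + y⁻¹*y⁻¹*q*P⁻¹)) * mul_inv_cancel₀ hP

set_option maxHeartbeats 1000000 in
private lemma mu_sum_identity (q x y : ℂ) (hq : ‖q‖ < 1) (hq0 : q ≠ 0) (hx0 : x ≠ 0)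
    (hy0 : y ≠ 0) (hx : ∀ n : ℤ, 1 - x * q ^ n ≠ 0) :
    (∑' n : ℤ, (-1:ℂ)^n * y^n * q^(n*(n+1)/2) / (1 - x*q*q * q^n))
      - (1 - x/y*q) * (∑' n : ℤ, (-1:ℂ)^n * y^n * q^(n*(n+1)/2) / (1 - x*q * q^n))
      - x/y * (∑' n : ℤ, (-1:ℂ)^n * y^n * q^(n*(n+1)/2) / (1 - x * q^n)) = 0 := by
  have hny : (-y) ≠ 0 := neg_ne_zero.mpr hy0
  have hqn : ∀ m : ℤ, q ^ m ≠ 0 := fun m => zpow_ne_zero m hq0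
  have hmy : ∀ n : ℤ, (-1:ℂ)^n * y^n = (-y)^n := fun n => by rw [← mul_zpow, neg_one_mul]
  have hq2' : q^(2:ℤ) = q*q := by rw [show (2:ℤ) = 1+1 from rfl, zpow_add₀ hq0, zpow_one]
  -- reindex the first two sums
  have hs2 : (∑' n : ℤ, (-1:ℂ)^n * y^n * q^(n*(n+1)/2) / (1 - x*q*q * q^n))
      = ∑' n : ℤ, (-y)^(n-2) * q^((n-2)*((n-2)+1)/2) / (1 - x * q^n) := by
    rw [← (Equiv.subRight (2:ℤ)).tsum_eq
      (fun n : ℤ => (-1:ℂ)^n * y^n * q^(n*(n+1)/2) / (1 - x*q*q * q^n))]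
    refine tsum_congr fun n => ?_
    simp only [Equiv.subRight_apply]
    rw [hmy]
    have hden : x*q*q*q^(n-2) = x*q^n := by
      rw [zpow_sub₀ hq0, hq2']
      field_simp
    rw [hden]
  have hs1 : (∑' n : ℤ, (-1:ℂ)^n * y^n * q^(n*(n+1)/2) / (1 - x*q * q^n))
      = ∑' n : ℤ, (-y)^(n-1) * q^((n-1)*((n-1)+1)/2) / (1 - x * q^n) := by
    rw [← (Equiv.subRight (1:ℤ)).tsum_eq
      (fun n : ℤ => (-1:ℂ)^n * y^n * q^(n*(n+1)/2) / (1 - x*q * q^n))]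
    refine tsum_congr fun n => ?_
    simp only [Equiv.subRight_apply]
    rw [hmy]
    have hden : x*q*q^(n-1) = x*q^n := by
      rw [zpow_sub₀ hq0, zpow_one]
      field_simp
    rw [hden]
  have hs0 : (∑' n : ℤ, (-1:ℂ)^n * y^n * q^(n*(n+1)/2) / (1 - x * q^n))
      = ∑' n : ℤ, (-y)^n * q^(n*(n+1)/2) / (1 - x * q^n) :=
    tsum_congr fun n => by rw [hmy]
  rw [hs2, hs1, hs0]
  -- summability
  have hg0 : Summable (fun n : ℤ => (-y)^n * q^(n*(n+1)/2) / (1 - x*q^n)) :=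
    muSummable_core hq hq0 hny hx0 hx
  have hg1 : Summable (fun n : ℤ => (-y)^(n-1) * q^((n-1)*((n-1)+1)/2) / (1 - x*q^n)) := by
    apply ((Equiv.addRight (1:ℤ)).summable_iff).mp
    have hcx : ∀ m : ℤ, 1 - (x*q) * q^m ≠ 0 := fun m => by
      rw [show (x*q)*q^m = x*q^(m+1) from by rw [zpow_add_one₀ hq0]; ring]
      exact hx _
    refine (muSummable_core hq hq0 hny (mul_ne_zero hx0 hq0) hcx).congr fun n => ?_
    simp only [Function.comp_apply, Equiv.coe_addRight, add_sub_cancel_right]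
    rw [show x*q^(n+1) = x*q*q^n from by rw [zpow_add_one₀ hq0]; ring]
  have hg2 : Summable (fun n : ℤ => (-y)^(n-2) * q^((n-2)*((n-2)+1)/2) / (1 - x*q^n)) := by
    apply ((Equiv.addRight (2:ℤ)).summable_iff).mp
    have hcx : ∀ m : ℤ, 1 - (x*q*q) * q^m ≠ 0 := fun m => by
      rw [show (x*q*q)*q^m = x*q^(m+2) from by rw [zpow_add₀ hq0, hq2']; ring]
      exact hx _
    refine (muSummable_core hq hq0 hny (mul_ne_zero (mul_ne_zero hx0 hq0) hq0) hcx).congr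
      fun n => ?_
    simp only [Function.comp_apply, Equiv.coe_addRight, add_sub_cancel_right]
    rw [show x*q^(n+2) = x*q*q*q^n from by rw [zpow_add₀ hq0, hq2']; ring]
  have hb : Summable (fun n : ℤ => (-y)^n * q^(n*(n+1)/2 - n) * y⁻¹) := by
    apply Summable.mul_right
    refine (muSummable_theta hq hq0 (mul_ne_zero hny (inv_ne_zero hq0))).congr fun n => ?_
    rw [mul_zpow, inv_zpow, ← zpow_neg, mul_assoc, ← zpow_add₀ hq0, neg_add_eq_sub]
  have hb' : Summable (fun n : ℤ => (-y)^(n-1) * q^((n-1)*((n-1)+1)/2 - (n-1)) * y⁻¹) :=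
    ((Equiv.subRight (1:ℤ)).summable_iff).mpr hb
  -- pointwise identity
  have hkey : ∀ n : ℤ, (-y)^(n-2) * q^((n-2)*((n-2)+1)/2) / (1 - x*q^n)
      - (1 - x/y*q) * ((-y)^(n-1) * q^((n-1)*((n-1)+1)/2) / (1 - x*q^n))
      - x/y * ((-y)^n * q^(n*(n+1)/2) / (1 - x*q^n))
      = (-y)^n * q^(n*(n+1)/2 - n) * y⁻¹
        - (-y)^(n-1) * q^((n-1)*((n-1)+1)/2 - (n-1)) * y⁻¹ := by
    intro n
    have hsq : (-y)^(2:ℤ) = (-y)*(-y) := by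
      rw [show (2:ℤ) = 1+1 from rfl, zpow_add₀ hny, zpow_one]
    simp only [muE_sub_two, muE_sub_one]
    simp only [show ∀ m:ℤ, m - (2*n-1) = m - n - n + 1 from fun m => by ring,
      show ∀ m:ℤ, m - n - (n-1) = m - n - n + 1 from fun m => by ring]
    simp only [zpow_add_one₀ hq0, zpow_sub₀ hq0, zpow_sub₀ hny, zpow_one, hsq]
    linear_combination mu_alg_key ((-y)^n) (q^(n*(n+1)/2)) (q^n) x y q hy0 hq0 (hqn n) (hx n)
  rw [← tsum_mul_left, ← tsum_mul_left, ← Summable.tsum_sub hg2 (hg1.mul_left _),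
    ← Summable.tsum_sub (hg2.sub (hg1.mul_left _)) (hg0.mul_left _), tsum_congr hkey,
    Summable.tsum_sub hb hb']
  have hfin : (∑' n : ℤ, (-y)^(n-1) * q^((n-1)*((n-1)+1)/2 - (n-1)) * y⁻¹)
      = ∑' n : ℤ, (-y)^n * q^(n*(n+1)/2 - n) * y⁻¹ := by
    exact (Equiv.subRight (1:ℤ)).tsum_eq (fun n : ℤ => (-y)^n * q^(n*(n+1)/2 - n) * y⁻¹)
  rw [hfin, sub_self]

end MuHelpers

set_option maxHeartbeats 1000000 in
/-- The μ-function satisfies the q-Hermite–Weber type second-order q-difference equation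
`μ(q²x,y) - q^{1/2}(1-(x/y)q) μ(qx,y) - (x/y)q μ(x,y) = 0`, where shifting `x ↦ qx`
corresponds to `u ↦ u + τ`. -/
theorem zwegersMu_qdifference (τ u v : ℂ) (hτ : 0 < τ.im)
    (hu : ∀ n : ℤ, Complex.exp (2 * (π : ℂ) * I * u) ≠ Complex.exp (2 * (π : ℂ) * I * τ) ^ n)
    (hv : ∀ n : ℤ, Complex.exp (2 * (π : ℂ) * I * v) ≠ Complex.exp (2 * (π : ℂ) * I * τ) ^ n) :
    zwegersMu τ (u + 2 * τ) v -
      Complex.exp ((π : ℂ) * I * τ) *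
        (1 - Complex.exp (2 * (π : ℂ) * I * (u - v)) * Complex.exp (2 * (π : ℂ) * I * τ)) *
        zwegersMu τ (u + τ) v -
      Complex.exp (2 * (π : ℂ) * I * (u - v)) * Complex.exp (2 * (π : ℂ) * I * τ) *
        zwegersMu τ u v = 0 := by
  have hq0 : Complex.exp (2*(π:ℂ)*I*τ) ≠ 0 := Complex.exp_ne_zero _
  have hx0 : Complex.exp (2*(π:ℂ)*I*u) ≠ 0 := Complex.exp_ne_zero _
  have hy0 : Complex.exp (2*(π:ℂ)*I*v) ≠ 0 := Complex.exp_ne_zero _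
  have hqlt : ‖Complex.exp (2*(π:ℂ)*I*τ)‖ < 1 := by
    rw [Complex.norm_exp, Real.exp_lt_one_iff]
    have hre : (2*(π:ℂ)*I*τ).re = -(2*π*τ.im) := by
      simp [Complex.mul_re, Complex.mul_im]
    rw [hre]
    have := Real.pi_pos
    nlinarith
  have hx : ∀ n : ℤ, 1 - Complex.exp (2*(π:ℂ)*I*u) * Complex.exp (2*(π:ℂ)*I*τ)^n ≠ 0 := by
    intro n
    rw [sub_ne_zero]
    intro h
    exact hu (-n) (by rw [zpow_neg]; exact eq_inv_of_mul_eq_one_left h.symm)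
  have hkey := mu_sum_identity (Complex.exp (2*(π:ℂ)*I*τ)) (Complex.exp (2*(π:ℂ)*I*u))
    (Complex.exp (2*(π:ℂ)*I*v)) hqlt hq0 hx0 hy0 hx
  have h2 : Complex.exp (2*(π:ℂ)*I*(u+2*τ))
      = Complex.exp (2*(π:ℂ)*I*u) * Complex.exp (2*(π:ℂ)*I*τ) * Complex.exp (2*(π:ℂ)*I*τ) := by
    rw [← Complex.exp_add, ← Complex.exp_add]
    congr 1
    ring
  have h1 : Complex.exp (2*(π:ℂ)*I*(u+τ))
      = Complex.exp (2*(π:ℂ)*I*u) * Complex.exp (2*(π:ℂ)*I*τ) := by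
    rw [← Complex.exp_add]; congr 1; ring
  have he2 : Complex.exp ((π:ℂ)*I*(u+2*τ+v))
      = Complex.exp ((π:ℂ)*I*(u+v)) * Complex.exp (2*(π:ℂ)*I*τ) := by
    rw [← Complex.exp_add]; congr 1; ring
  have he1 : Complex.exp ((π:ℂ)*I*(u+τ+v))
      = Complex.exp ((π:ℂ)*I*(u+v)) * Complex.exp ((π:ℂ)*I*τ) := by
    rw [← Complex.exp_add]; congr 1; ring
  have hxy : Complex.exp (2*(π:ℂ)*I*(u-v))
      = Complex.exp (2*(π:ℂ)*I*u) * (Complex.exp (2*(π:ℂ)*I*v))⁻¹ := by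
    rw [← Complex.exp_neg, ← Complex.exp_add]; congr 1; ring
  have hs : Complex.exp ((π:ℂ)*I*τ) * Complex.exp ((π:ℂ)*I*τ) = Complex.exp (2*(π:ℂ)*I*τ) := by
    rw [← Complex.exp_add]; congr 1; ring
  unfold zwegersMu
  rw [h2, h1, he2, he1, hxy]
  linear_combination (I * Complex.exp (-(π:ℂ)*I*τ/4) * Complex.exp ((π:ℂ)*I*(u+v))
      / thetaQ (Complex.exp (2*(π:ℂ)*I*τ)) (-Complex.exp (2*(π:ℂ)*I*v))
      * Complex.exp (2*(π:ℂ)*I*τ)) * hkey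
    - (I * Complex.exp (-(π:ℂ)*I*τ/4) * Complex.exp ((π:ℂ)*I*(u+v))
      / thetaQ (Complex.exp (2*(π:ℂ)*I*τ)) (-Complex.exp (2*(π:ℂ)*I*v))
      * (1 - Complex.exp (2*(π:ℂ)*I*u) * (Complex.exp (2*(π:ℂ)*I*v))⁻¹
          * Complex.exp (2*(π:ℂ)*I*τ))
      * (∑' n : ℤ, (-1:ℂ)^n * Complex.exp (2*(π:ℂ)*I*v)^n
          * Complex.exp (2*(π:ℂ)*I*τ)^(n*(n+1)/2)
          / (1 - Complex.exp (2*(π:ℂ)*I*u) * Complex.exp (2*(π:ℂ)*I*τ)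
              * Complex.exp (2*(π:ℂ)*I*τ)^n))) * hs
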